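/- Let Λ > 0 and ε ∈ (0, 2^{−e}] with eΛ < min{ln(1/ε), e ln 2}. If K + 1 ≥ ln(1/ε)/W(ln(1/ε)/(Λe)) where W is the Lambert W function, then (eΛ/(K+1))^{K+1} ≤ ε. -/

import Mathlib

/-- Truncation-order bound: let `Λ > 0`, `ε ∈ (0, 2^{−e}]` with
`eΛ < min{ln(1/ε), e ln 2}`.  If `K + 1 ≥ ln(1/ε)/W(ln(1/ε)/(Λe))`, where
`w = W(ln(1/ε)/(Λe))` is the principal Lambert W value (the unique `w ≥ 0` with
`w·e^w = ln(1/ε)/(Λe)`), then `(eΛ/(K+1))^{K+1} ≤ ε`. -/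
theorem truncation_order_bound (Λ ε w : ℝ) (K : ℕ)
    (hΛ : 0 < Λ) (hε0 : 0 < ε) (hε1 : ε ≤ (2 : ℝ) ^ (-(Real.exp 1)))
    (hsmall : Real.exp 1 * Λ < min (Real.log (1 / ε)) (Real.exp 1 * Real.log 2))
    (hw0 : 0 ≤ w)
    (hw : w * Real.exp w = Real.log (1 / ε) / (Λ * Real.exp 1))
    (hK : Real.log (1 / ε) / w ≤ (K : ℝ) + 1) :
    (Real.exp 1 * Λ / ((K : ℝ) + 1)) ^ (K + 1) ≤ ε := by
  have he : (0:ℝ) < Real.exp 1 := Real.exp_pos 1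
  set L := Real.log (1 / ε) with hLdef
  have hL0 : 0 < L := lt_trans (by positivity) (lt_of_lt_of_le hsmall (min_le_left _ _))
  -- w > 0
  have hwpos : 0 < w := by
    rcases hw0.lt_or_eq with h | h
    · exact h
    · exfalso
      have : (0:ℝ) < L / (Λ * Real.exp 1) := by positivity
      rw [← hw, ← h] at this
      simp at this
  -- L = Λ * w * exp (1 + w)
  have hLval : L = Λ * w * Real.exp (1 + w) := by
    have h1 : w * Real.exp w * (Λ * Real.exp 1) = L := by
      field_simp at hw
      linarith [hw]
    rw [← h1, Real.exp_add]
    ring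
  -- x₀ := Λ * exp (1 + w)
  set x₀ : ℝ := Λ * Real.exp (1 + w) with hx₀def
  have hx₀pos : 0 < x₀ := by positivity
  have hLw : L / w = x₀ := by
    rw [hLval]; field_simp; ring
  have hΛx₀ : Λ ≤ x₀ := by
    have h1 : (1:ℝ) ≤ Real.exp (1 + w) := Real.one_le_exp (by linarith)
    nlinarith
  set N : ℝ := (K : ℝ) + 1 with hNdef
  have hN0 : 0 < N := by positivity
  have hx₀N : x₀ ≤ N := by rw [← hLw]; exact hK
  -- antitone of g(x) = x * (1 + log Λ - log x) on Ici Λ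
  have hanti : AntitoneOn (fun x : ℝ => x * (1 + Real.log Λ - Real.log x)) (Set.Ici Λ) := by
    have hint : interior (Set.Ici Λ) = Set.Ioi Λ := interior_Ici
    apply antitoneOn_of_deriv_nonpos (convex_Ici Λ)
    · apply ContinuousOn.mul continuousOn_id
      apply ContinuousOn.sub continuousOn_const
      exact Real.continuousOn_log.mono (fun x hx => by
        simp only [Set.mem_compl_iff, Set.mem_singleton_iff]
        have : Λ ≤ x := hx
        intro h; rw [h] at this; linarith)
    · intro x hx
      rw [hint] at hx
      have hxpos : 0 < x := hΛ.trans hx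
      exact ((hasDerivAt_id x).mul (((hasDerivAt_const x (1 + Real.log Λ)).sub
        (Real.hasDerivAt_log hxpos.ne')))).differentiableAt.differentiableWithinAt
    · intro x hx
      rw [hint] at hx
      have hxpos : 0 < x := hΛ.trans hx
      have hd : HasDerivAt (fun x : ℝ => x * (1 + Real.log Λ - Real.log x))
          (Real.log Λ - Real.log x) x := by
        have := (hasDerivAt_id' x).fun_mul ((hasDerivAt_const x (1 + Real.log Λ)).fun_sub
          (Real.hasDerivAt_log hxpos.ne'))
        refine this.congr_deriv ?_
        linear_combination (-1:ℝ) * mul_inv_cancel₀ hxpos.ne'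
      rw [hd.deriv]
      have : Real.log Λ ≤ Real.log x := Real.log_le_log hΛ hx.le
      linarith
  have hgx₀ : x₀ * (1 + Real.log Λ - Real.log x₀) = -L := by
    have hlog : Real.log x₀ = Real.log Λ + (1 + w) := by
      rw [hx₀def, Real.log_mul hΛ.ne' (Real.exp_ne_zero _), Real.log_exp]
    rw [hlog, hLval, hx₀def]; ring
  have hgN : N * (1 + Real.log Λ - Real.log N) ≤ -L := by
    have := hanti (Set.mem_Ici.mpr hΛx₀) (Set.mem_Ici.mpr (hΛx₀.trans hx₀N)) hx₀N
    simpa [hgx₀] using this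
  -- conclude
  have hpos : 0 < Real.exp 1 * Λ / N := by positivity
  have hlogq : Real.log (Real.exp 1 * Λ / N) = 1 + Real.log Λ - Real.log N := by
    rw [Real.log_div (by positivity) hN0.ne', Real.log_mul (Real.exp_ne_zero _) hΛ.ne',
      Real.log_exp]
  have hεL : Real.exp (-L) = ε := by
    rw [hLdef, one_div, Real.log_inv, neg_neg, Real.exp_log hε0]
  calc (Real.exp 1 * Λ / N) ^ (K + 1)
      = Real.exp (Real.log (Real.exp 1 * Λ / N)) ^ (K + 1) := by rw [Real.exp_log hpos]
    _ = Real.exp (((K:ℝ) + 1) * Real.log (Real.exp 1 * Λ / N)) := by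
        rw [← Real.exp_nat_mul]; norm_num
    _ = Real.exp (N * (1 + Real.log Λ - Real.log N)) := by rw [hlogq, hNdef]
    _ ≤ Real.exp (-L) := Real.exp_le_exp.mpr hgN
    _ = ε := hεL
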